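/- For every ℓ ≥ 2, the set D_{3ℓ}(H_ℓ) has a witness (namely H_ℓ), it consists of k = ℓ + 2 isomorphism classes of posets of size n = 3ℓ, its smallest witness has size |H_ℓ| = 6ℓ − 2, every poset in D_{3ℓ}(H_ℓ) as well as H_ℓ itself has height at most 2, and for any constant c ∈ ℕ the smallest witness size 6ℓ − 2 is strictly greater than n + k + c = 4ℓ + 2 + c whenever ℓ > 2 + c/2. -/

import Mathlib

/-!
Formalization framework: finite posets are bundled as `FinPartOrd.{0}`, downsets are
`Finset`s of elements, unlabelled posets are isomorphism classes (`UPoset`), and a witness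
of a set `Γ` of unlabelled posets at size `n` is a finite poset whose set of size-`n`
downsets, up to isomorphism, is exactly `Γ`.
-/

attribute [local instance] Classical.propDecidable

noncomputable section

open Finset

/-- `D` is a downset of the finite poset `Q`. -/
def IsDownset (Q : FinPartOrd.{0}) (D : Finset ↥Q) : Prop :=
  ∀ ⦃a b : ↥Q⦄, a ∈ D → b ≤ a → b ∈ D

/-- The induced subposet of `Q` on a finset `D` of its elements. -/
def subposet (Q : FinPartOrd.{0}) (D : Finset ↥Q) : FinPartOrd.{0} :=
  FinPartOrd.of {x : ↥Q // x ∈ D}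

/-- The isomorphism setoid on finite posets. -/
def isoSetoid : Setoid FinPartOrd.{0} where
  r P Q := Nonempty (↥P ≃o ↥Q)
  iseqv := ⟨fun _ => ⟨OrderIso.refl _⟩, fun ⟨e⟩ => ⟨e.symm⟩, fun ⟨e⟩ ⟨f⟩ => ⟨e.trans f⟩⟩

/-- Unlabelled finite posets: isomorphism classes of finite posets. -/
def UPoset := Quotient isoSetoid

/-- The isomorphism class of a finite poset. -/
def cls (P : FinPartOrd.{0}) : UPoset := Quotient.mk isoSetoid P

/-- The number of elements of a finite poset. -/
def size (Q : FinPartOrd.{0}) : ℕ := Fintype.card ↥Q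

/-- The size of an isomorphism class of finite posets. -/
def usize : UPoset → ℕ :=
  Quotient.lift size fun _ _ h => h.elim fun e => Fintype.card_congr e.toEquiv

/-- `D_n(Q)` : the set of downsets of `Q` of size `n`, up to isomorphism. -/
def DSet (n : ℕ) (Q : FinPartOrd.{0}) : Set UPoset :=
  {c | ∃ D : Finset ↥Q, IsDownset Q D ∧ D.card = n ∧ cls (subposet Q D) = c}

/-- `d_n(Q)` : the number of isomorphism classes of downsets of `Q` of size `n`. -/
def dNum (n : ℕ) (Q : FinPartOrd.{0}) : ℕ := (DSet n Q).ncard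

/-- `D(Q)` : the set of nonempty downsets of `Q`, up to isomorphism. -/
def DAllSet (Q : FinPartOrd.{0}) : Set UPoset :=
  {c | ∃ D : Finset ↥Q, IsDownset Q D ∧ D.Nonempty ∧ cls (subposet Q D) = c}

/-- `Q` is a witness of the set `Γ` of unlabelled posets (at size `n`): the set of size-`n`
downsets of `Q`, up to isomorphism, is exactly `Γ`. -/
def IsWitness (n : ℕ) (Γ : Set UPoset) (Q : FinPartOrd.{0}) : Prop := DSet n Q = Γ

/-- `Q` is a minimal witness of `Γ` : `Q` is a witness and no proper downset of `Q` is
itself a witness of `Γ`. -/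
def IsMinimalWitness (n : ℕ) (Γ : Set UPoset) (Q : FinPartOrd.{0}) : Prop :=
  IsWitness n Γ Q ∧
    ∀ D : Finset ↥Q, IsDownset Q D → D ≠ Finset.univ → ¬IsWitness n Γ (subposet Q D)

/-- The height of an element: the number of elements of a longest chain whose maximum is `x`. -/
def heightEl (Q : FinPartOrd.{0}) (x : ↥Q) : ℕ :=
  sSup {k | ∃ c : Finset ↥Q, IsChain (· ≤ ·) (c : Set ↥Q) ∧ x ∈ c ∧ (∀ y ∈ c, y ≤ x) ∧ c.card = k}

/-- The height of a finite poset: the number of elements of a longest chain. -/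
def posetHeight (Q : FinPartOrd.{0}) : ℕ :=
  sSup {k | ∃ c : Finset ↥Q, IsChain (· ≤ ·) (c : Set ↥Q) ∧ c.card = k}

/-- A finite poset is Newtonian if every element of level `i` covers every element of
level `i - 1`. -/
def Newtonian (Q : FinPartOrd.{0}) : Prop :=
  ∀ x y : ↥Q, heightEl Q y = heightEl Q x + 1 → x ⋖ y

/-- A finite poset is connected if it is nonempty and any two elements are joined by a
comparability path. -/
def ConnectedPoset (Q : FinPartOrd.{0}) : Prop :=
  Nonempty ↥Q ∧ ∀ x y : ↥Q, Relation.ReflTransGen (fun a b : ↥Q => a ≤ b ∨ b ≤ a) x y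

/-- `x` is a maximal element of the subset `W` of `Q`. -/
def IsMaxIn (Q : FinPartOrd.{0}) (W : Finset ↥Q) (x : ↥Q) : Prop :=
  x ∈ W ∧ ∀ y ∈ W, x ≤ y → y = x

/-- `x` is a maximal element of the finite poset `R`. -/
def IsMaxEl (R : FinPartOrd.{0}) (x : ↥R) : Prop := ∀ y, x ≤ y → y = x

/-- A poset of type 𝒲 : the disjoint union of two connected Newtonian posets that are not
isomorphic, but which only differ in one maximal element (they become isomorphic after the
removal of a suitable maximal element from each). -/
def TypeW (P : FinPartOrd.{0}) : Prop :=
  ∃ W₁ W₂ : Finset ↥P,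
    W₁ ∪ W₂ = Finset.univ ∧ Disjoint W₁ W₂ ∧
    (∀ x ∈ W₁, ∀ y ∈ W₂, ¬x ≤ y ∧ ¬y ≤ x) ∧
    ConnectedPoset (subposet P W₁) ∧ ConnectedPoset (subposet P W₂) ∧
    Newtonian (subposet P W₁) ∧ Newtonian (subposet P W₂) ∧
    ¬Nonempty (↥(subposet P W₁) ≃o ↥(subposet P W₂)) ∧
    ∃ x y, IsMaxIn P W₁ x ∧ IsMaxIn P W₂ y ∧
      Nonempty (↥(subposet P (W₁.erase x)) ≃o ↥(subposet P (W₂.erase y)))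

/-- An antichain on `i` elements. -/
def AntichainFin (i : ℕ) : Type := Fin i

instance (i : ℕ) : PartialOrder (AntichainFin i) where
  le x y := x = y
  le_refl _ := rfl
  le_trans a b c h₁ h₂ := show a = c from (show a = b from h₁).trans (show b = c from h₂)
  le_antisymm _ _ h _ := h

instance (i : ℕ) : Fintype (AntichainFin i) := inferInstanceAs (Fintype (Fin i))
instance (i : ℕ) : Fintype (WithTop (AntichainFin i)) :=
  inferInstanceAs (Fintype (Option (Fin i)))

/-- `Λ_i`: the poset with `i` minimal elements and one maximal element above all of them. -/
def Lambda (i : ℕ) : FinPartOrd.{0} := FinPartOrd.of (WithTop (AntichainFin i))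

/-- `k` disjoint copies of a poset `α`. -/
def Copies (k : ℕ) (α : Type) : Type := Fin k × α

instance (k : ℕ) (α : Type) [PartialOrder α] : PartialOrder (Copies k α) where
  le x y := x.1 = y.1 ∧ x.2 ≤ y.2
  le_refl _ := ⟨rfl, le_refl _⟩
  le_trans _ _ _ h₁ h₂ := ⟨h₁.1.trans h₂.1, le_trans h₁.2 h₂.2⟩
  le_antisymm x y h₁ h₂ := by
    obtain ⟨x₁, x₂⟩ := x
    obtain ⟨y₁, y₂⟩ := y
    obtain ⟨h, h'⟩ := h₁
    cases h
    exact congrArg _ (le_antisymm h' h₂.2)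

instance (k : ℕ) (α : Type) [Fintype α] : Fintype (Copies k α) :=
  inferInstanceAs (Fintype (Fin k × α))

/-- `H_ℓ`: the poset whose connected components are `ℓ` copies of `Λ₂` and one copy of
`Λ_{3(ℓ-1)}`. -/
def Hposet (ℓ : ℕ) : FinPartOrd.{0} :=
  FinPartOrd.of (Copies ℓ (WithTop (AntichainFin 2)) ⊕ WithTop (AntichainFin (3 * (ℓ - 1))))

/-- The poset `P₀` placed above a chain of `i` elements. -/
def withChain (P₀ : FinPartOrd.{0}) (i : ℕ) : FinPartOrd.{0} :=
  FinPartOrd.of (Fin i ⊕ₗ ↥P₀)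

/-- The disjoint union of two finite posets. -/
def disjSum (P R : FinPartOrd.{0}) : FinPartOrd.{0} := FinPartOrd.of (↥P ⊕ ↥R)

/-- The poset `P_iR_i`: the disjoint union of `P₀` and `R₀` each placed above a chain of
`i` elements. -/
def PRposet (P₀ R₀ : FinPartOrd.{0}) (i : ℕ) : FinPartOrd.{0} :=
  disjSum (withChain P₀ i) (withChain R₀ i)

/-- `C(P₀R₀) = |D(P₀)| + |D(R₀)| − |D(P₀) ∩ D(R₀)|`. -/
def CNum (P₀ R₀ : FinPartOrd.{0}) : ℕ :=
  (DAllSet P₀).ncard + (DAllSet R₀).ncard - (DAllSet P₀ ∩ DAllSet R₀).ncard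

/-- The vertices of the exchange graph: the downsets of `Q` of size `n`, as actual subsets. -/
def EGVert (n : ℕ) (Q : FinPartOrd.{0}) : Type :=
  {D : Finset ↥Q // IsDownset Q D ∧ D.card = n}

/-- The exchange graph `G_n(Q)`: two size-`n` downsets are adjacent iff they differ by
exactly one element. -/
def ExchangeGraph (n : ℕ) (Q : FinPartOrd.{0}) : SimpleGraph (EGVert n Q) where
  Adj X Y := (X.1 \ Y.1).card = 1 ∧ (Y.1 \ X.1).card = 1
  symm := ⟨fun X Y h => ⟨h.2, h.1⟩⟩
  loopless := ⟨fun X h => by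
    simp only [Finset.sdiff_self, Finset.card_empty] at h
    exact absurd h.1 (by simp)⟩

/-- The downset `D` of `Q`, viewed as a poset, is isomorphic (a "copy of") `P`. -/
def IsoTo (Q : FinPartOrd.{0}) (D : Finset ↥Q) (P : FinPartOrd.{0}) : Prop :=
  Nonempty (↥(subposet Q D) ≃o ↥P)

/-- A path `A :: M ++ [C]` in the exchange graph `G_n(Q)` whose first vertex is a copy of
`Pa`, whose last vertex is a copy of `Pb`, and all of whose internal vertices are copies of
`Pmid`. -/
def SpecialPath (n : ℕ) (Q : FinPartOrd.{0}) (Pa Pmid Pb : FinPartOrd.{0})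
    (A : EGVert n Q) (M : List (EGVert n Q)) (C : EGVert n Q) : Prop :=
  List.Chain' (ExchangeGraph n Q).Adj (A :: M ++ [C]) ∧
    IsoTo Q A.1 Pa ∧ IsoTo Q C.1 Pb ∧ ∀ v ∈ M, IsoTo Q v.1 Pmid

/-- `T` is an antichain in `Q`. -/
def IsAntichainIn (Q : FinPartOrd.{0}) (T : Finset ↥Q) : Prop :=
  ∀ x ∈ T, ∀ y ∈ T, x ≤ y → x = y

/-- The possible shapes of `A \ X` and `C \ X`: an antichain possibly together with a single
element below all of it and/or a single element above all of it, or a two-element chain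
together with one incomparable element. -/
def GoodForm (Q : FinPartOrd.{0}) (S : Finset ↥Q) : Prop :=
  (∃ T : Finset ↥Q, IsAntichainIn Q T ∧
    (S = T ∨
      (∃ b, b ∉ T ∧ S = insert b T ∧ ∀ x ∈ T, b < x) ∨
      (∃ t, t ∉ T ∧ S = insert t T ∧ ∀ x ∈ T, x < t) ∨
      (∃ b t, b ∉ T ∧ t ∉ T ∧ b ≠ t ∧ S = insert b (insert t T) ∧
        (∀ x ∈ T, b < x) ∧ ∀ x ∈ T, x < t))) ∨
  (∃ x y z : ↥Q, S = {x, y, z} ∧ x ≠ y ∧ x ≠ z ∧ y ≠ z ∧ x < y ∧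
    ¬x ≤ z ∧ ¬z ≤ x ∧ ¬y ≤ z ∧ ¬z ≤ y)


section Machinery

variable {α β : Type} [PartialOrder α] [Fintype α] [PartialOrder β] [Fintype β]

/-- strict lower set -/
def lowF (x : α) : Finset α := Finset.univ.filter (· < x)

lemma mem_lowF {x y : α} : y ∈ lowF x ↔ y < x := by simp [lowF]

/-- fan forest: unique strict upper bounds, no 3-chains -/
def FF (α : Type) [PartialOrder α] : Prop :=
  (∀ x y z : α, x < y → x < z → y = z) ∧ ∀ x y z : α, x < y → y < z → False

def nkF (α : Type) [PartialOrder α] [Fintype α] (k : ℕ) : ℕ :=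
  (Finset.univ.filter (fun x : α => (lowF x).card = k)).card

lemma ff_leaf_low (h : FF α) {x b : α} (hx : x ∈ lowF b) : lowF x = ∅ := by
  rw [Finset.eq_empty_iff_forall_notMem]
  intro z hz
  exact h.2 z x b (mem_lowF.1 hz) (mem_lowF.1 hx)

lemma ff_leaf_not_max {x b : α} (hx : x ∈ lowF b) : ¬IsMax x := by
  intro hm
  exact absurd (hm (mem_lowF.1 hx).le) (not_le_of_gt (mem_lowF.1 hx))

def ffB (α : Type) [PartialOrder α] [Fintype α] := {x : α // (lowF x).card ≠ 0}
def ffI (α : Type) [PartialOrder α] [Fintype α] := {x : α // (lowF x).card = 0 ∧ IsMax x}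

instance : Fintype (ffB α) := by unfold ffB; infer_instance
instance : Fintype (ffI α) := by unfold ffI; infer_instance

def ffF : (Σ b : ffB α, Option ↥(lowF b.val)) ⊕ ffI α → α :=
  Sum.elim (fun p => p.2.elim p.1.val Subtype.val) (fun i => i.val)

lemma ffF_bij (h : FF α) : Function.Bijective (ffF (α := α)) := by
  constructor
  · rintro (⟨b, (_|z)⟩ | i) (⟨b', (_|z')⟩ | i') he <;> simp [ffF] at he
    · cases Subtype.ext he; rfl
    · -- b.val = z'.val with z' leaf : contradiction card
      exfalso
      have h0 := ff_leaf_low h z'.2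
      have := b.2
      rw [he, h0] at this
      simp at this
    · exfalso
      have := i'.2.1
      rw [← he] at this
      exact b.2 this
    · exfalso
      have h0 := ff_leaf_low h z.2
      have := b'.2
      rw [← he] at this
      rw [h0] at this
      simp at this
    · -- leaf leaf
      have hb : b.val = b'.val :=
        h.1 z.val b.val b'.val (mem_lowF.1 z.2) (he ▸ mem_lowF.1 z'.2)
      have hbb : b = b' := Subtype.ext hb
      subst hbb
      have : z = z' := Subtype.ext he
      subst this; rfl
    · exfalso
      exact ff_leaf_not_max (he ▸ z.2) i'.2.2
    · exfalso
      have := i.2.1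
      rw [he] at this
      exact b'.2 this
    · exfalso
      exact ff_leaf_not_max (he ▸ z'.2) i.2.2
    · exact congrArg _ (Subtype.ext he)
  · intro x
    by_cases hb : (lowF x).card ≠ 0
    · exact ⟨Sum.inl ⟨⟨x, hb⟩, none⟩, rfl⟩
    · push_neg at hb
      by_cases hm : IsMax x
      · exact ⟨Sum.inr ⟨x, hb, hm⟩, rfl⟩
      · rw [not_isMax_iff] at hm
        obtain ⟨y, hy⟩ := hm
        have hxy : x ∈ lowF y := mem_lowF.2 hy
        have hyB : (lowF y).card ≠ 0 := by
          simp [Finset.card_ne_zero, Finset.nonempty_iff_ne_empty.symm]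
          exact ⟨x, hxy⟩
        exact ⟨Sum.inl ⟨⟨y, hyB⟩, some ⟨x, hxy⟩⟩, rfl⟩

lemma equiv_of_fiber_card {A B : Type} [Fintype A] [Fintype B] (f : A → ℕ) (g : B → ℕ)
    (h : ∀ k, Fintype.card {a // f a = k} = Fintype.card {b // g b = k}) :
    ∃ e : A ≃ B, ∀ a, g (e a) = f a := by
  let E : ∀ k, {a // f a = k} ≃ {b // g b = k} := fun k => Fintype.equivOfCardEq (h k)
  exact ⟨(Equiv.sigmaFiberEquiv f).symm.trans ((Equiv.sigmaCongrRight E).trans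
      (Equiv.sigmaFiberEquiv g)), fun a => (E (f a) ⟨a, rfl⟩).2⟩

lemma ffB_fiber_card (k : ℕ) :
    Fintype.card {b : ffB α // (lowF b.val).card = k} = if k = 0 then 0 else nkF α k := by
  split
  · next h0 =>
    subst h0
    rw [Fintype.card_eq_zero_iff]
    exact ⟨fun ⟨b, hb⟩ => b.2 hb⟩
  · next h0 =>
    rw [nkF, ← Fintype.card_subtype]
    exact Fintype.card_congr
      ⟨fun p => ⟨p.1.val, p.2⟩, fun x => ⟨⟨x.val, by rw [x.2]; exact h0⟩, x.2⟩,
        fun p => rfl, fun x => rfl⟩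

lemma ff_trichot (x : α) :
    (lowF x).card ≠ 0 ∨ ((lowF x).card = 0 ∧ IsMax x) ∨ ∃ b : ffB α, x ∈ lowF b.val := by
  by_cases hb : (lowF x).card ≠ 0
  · exact Or.inl hb
  · push_neg at hb
    by_cases hm : IsMax x
    · exact Or.inr (Or.inl ⟨hb, hm⟩)
    · rw [not_isMax_iff] at hm
      obtain ⟨y, hy⟩ := hm
      have hxy : x ∈ lowF y := mem_lowF.2 hy
      have hyB : (lowF y).card ≠ 0 := by
        simp [Finset.card_ne_zero, Finset.nonempty_iff_ne_empty.symm]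
        exact ⟨x, hxy⟩
      exact Or.inr (Or.inr ⟨⟨y, hyB⟩, hxy⟩)

theorem ff_iso (hα : FF α) (hβ : FF β) (hcard : Fintype.card α = Fintype.card β)
    (hk : ∀ k, 0 < k → nkF α k = nkF β k) : Nonempty (α ≃o β) := by
  obtain ⟨σB, hσB⟩ := equiv_of_fiber_card (fun b : ffB α => (lowF b.val).card)
    (fun b : ffB β => (lowF b.val).card) (by
      intro k
      rw [ffB_fiber_card k, ffB_fiber_card k]
      split
      · rfl
      · exact hk _ (Nat.pos_of_ne_zero ‹_›))
  have hIcard : Fintype.card (ffI α) = Fintype.card (ffI β) := by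
    have h1 : ∀ (γ : Type) (_ : PartialOrder γ) (_ : Fintype γ) (h : FF γ),
        Fintype.card γ = (∑ b : ffB γ, ((lowF b.val).card + 1)) + Fintype.card (ffI γ) := by
      intro γ _ _ h
      rw [← Fintype.card_congr (Equiv.ofBijective _ (ffF_bij h))]
      rw [Fintype.card_sum, Fintype.card_sigma]
      congr 1
      apply Finset.sum_congr rfl
      intro b _
      rw [Fintype.card_option, Fintype.card_coe]
    have hS : (∑ b : ffB α, ((lowF b.val).card + 1)) = ∑ b : ffB β, ((lowF b.val).card + 1) :=
      Fintype.sum_equiv σB _ _ (fun b => by rw [hσB b])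
    have e1 := h1 α ‹_› ‹_› hα
    have e2 := h1 β ‹_› ‹_› hβ
    omega
  let σI : ffI α ≃ ffI β := Fintype.equivOfCardEq hIcard
  let Eb : ∀ b : ffB α, ↥(lowF b.val) ≃ ↥(lowF (σB b).val) := fun b =>
    Fintype.equivOfCardEq (by rw [Fintype.card_coe, Fintype.card_coe]; exact (hσB b).symm)
  let partα : _ ≃ α := Equiv.ofBijective _ (ffF_bij hα)
  let partβ : _ ≃ β := Equiv.ofBijective _ (ffF_bij hβ)
  let mid := Equiv.sumCongr (Equiv.sigmaCongr (β₂ := fun b' : ffB β => Option ↥(lowF b'.val)) σB (fun b => Equiv.optionCongr (Eb b))) σI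
  let e : α ≃ β := partα.symm.trans (mid.trans partβ)
  have ceB : ∀ b : ffB α, e b.val = (σB b).val := by
    intro b
    show partβ (mid (partα.symm b.val)) = _
    have h1 : partα.symm b.val = Sum.inl ⟨b, none⟩ := (Equiv.symm_apply_eq _).2 rfl
    rw [h1]; rfl
  have ceL : ∀ (b : ffB α) (z : ↥(lowF b.val)), e z.val = (Eb b z).val := by
    intro b z
    show partβ (mid (partα.symm z.val)) = _
    have h1 : partα.symm z.val = Sum.inl ⟨b, some z⟩ := (Equiv.symm_apply_eq _).2 rfl
    rw [h1]; rfl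
  have ceI : ∀ i : ffI α, e i.val = (σI i).val := by
    intro i
    show partβ (mid (partα.symm i.val)) = _
    have h1 : partα.symm i.val = Sum.inr i := (Equiv.symm_apply_eq _).2 rfl
    rw [h1]; rfl
  have hlt : ∀ x y : α, x < y ↔ e x < e y := by
    intro x y
    constructor
    · intro hxy
      have hyB : (lowF y).card ≠ 0 := by
        simp [Finset.card_ne_zero, Finset.nonempty_iff_ne_empty.symm]
        exact ⟨x, mem_lowF.2 hxy⟩
      have hx : x ∈ lowF (⟨y, hyB⟩ : ffB α).val := mem_lowF.2 hxy
      rw [ceL ⟨y, hyB⟩ ⟨x, hx⟩, ceB ⟨y, hyB⟩]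
      exact mem_lowF.1 (Eb ⟨y, hyB⟩ ⟨x, hx⟩).2
    · intro hexy
      rcases ff_trichot x with hxB | hxI | ⟨b, hxb⟩
      · exfalso
        have h1 : e x = (σB ⟨x, hxB⟩).val := ceB ⟨x, hxB⟩
        have h2 := ff_leaf_low hβ (mem_lowF.2 hexy)
        have := (σB ⟨x, hxB⟩).2
        rw [← h1, h2] at this
        simp at this
      · exfalso
        have h1 : e x = (σI ⟨x, hxI⟩).val := ceI ⟨x, hxI⟩
        exact ff_leaf_not_max (mem_lowF.2 hexy) (h1 ▸ (σI ⟨x, hxI⟩).2.2)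
      · have h1 : e x = (Eb b ⟨x, hxb⟩).val := ceL b ⟨x, hxb⟩
        have h2 : e x < (σB b).val := h1 ▸ mem_lowF.1 (Eb b ⟨x, hxb⟩).2
        have h3 : (σB b).val = e y := hβ.1 (e x) (σB b).val (e y) h2 hexy
        rcases ff_trichot y with hyB | hyI | ⟨b', hyb⟩
        · have h4 : e y = (σB ⟨y, hyB⟩).val := ceB ⟨y, hyB⟩
          have h5 : σB b = σB ⟨y, hyB⟩ := Subtype.ext (by rw [h3, h4])
          have h6 : b = ⟨y, hyB⟩ := σB.injective h5
          have : x < b.val := mem_lowF.1 hxb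
          rw [h6] at this
          exact this
        · exfalso
          have h4 : e y = (σI ⟨y, hyI⟩).val := ceI ⟨y, hyI⟩
          have h5 := (σI ⟨y, hyI⟩).2.1
          rw [← h4, ← h3] at h5
          exact (σB b).2 h5
        · exfalso
          have h4 : e y = (Eb b' ⟨y, hyb⟩).val := ceL b' ⟨y, hyb⟩
          have h5 := ff_leaf_low hβ (h4 ▸ (Eb b' ⟨y, hyb⟩).2)
          have := (σB b).2
          rw [h3, h5] at this
          simp at this
  exact ⟨⟨e, by
    intro a b
    simp only [le_iff_lt_or_eq, ← hlt, EmbeddingLike.apply_eq_iff_eq]⟩⟩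

lemma lowF_iso (e : α ≃o β) (x : α) : lowF (e x) = (lowF x).image e := by
  ext y
  simp only [mem_lowF, Finset.mem_image]
  constructor
  · intro hy
    refine ⟨e.symm y, ?_, e.apply_symm_apply y⟩
    have := e.symm.lt_iff_lt.2 hy
    rwa [e.symm_apply_apply] at this
  · rintro ⟨z, hz, rfl⟩
    exact e.lt_iff_lt.2 hz

lemma card_lowF_iso (e : α ≃o β) (x : α) : (lowF (e x)).card = (lowF x).card := by
  rw [lowF_iso e x, Finset.card_image_of_injective _ e.injective]

lemma nkF_iso (e : α ≃o β) (k : ℕ) : nkF β k = nkF α k := by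
  unfold nkF
  apply Finset.card_bij (fun (b : β) _ => e.symm b)
  · intro b hb
    simp only [Finset.mem_filter, Finset.mem_univ, true_and] at hb ⊢
    rw [← card_lowF_iso e (e.symm b), e.apply_symm_apply]
    exact hb
  · intro a _ b _ h
    exact e.symm.injective h
  · intro a ha
    simp only [Finset.mem_filter, Finset.mem_univ, true_and] at ha ⊢
    exact ⟨e a, by rw [card_lowF_iso e a]; exact ha, e.symm_apply_apply a⟩

lemma FF_iso (e : α ≃o β) (h : FF α) : FF β := by
  constructor
  · intro x y z hxy hxz
    have := h.1 (e.symm x) (e.symm y) (e.symm z) (e.symm.lt_iff_lt.2 hxy) (e.symm.lt_iff_lt.2 hxz)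
    exact e.symm.injective this
  · intro x y z hxy hyz
    exact h.2 (e.symm x) (e.symm y) (e.symm z) (e.symm.lt_iff_lt.2 hxy) (e.symm.lt_iff_lt.2 hyz)

lemma FF_subtype {p : α → Prop} (h : FF α) : FF {x // p x} := by
  constructor
  · intro x y z hxy hxz
    exact Subtype.ext (h.1 x.val y.val z.val (Subtype.coe_lt_coe.2 hxy) (Subtype.coe_lt_coe.2 hxz))
  · intro x y z hxy hyz
    exact h.2 x.val y.val z.val (Subtype.coe_lt_coe.2 hxy) (Subtype.coe_lt_coe.2 hyz)

lemma card_lowF_downset {D : Finset α} (hD : ∀ ⦃a b : α⦄, a ∈ D → b ≤ a → b ∈ D)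
    (x : {y // y ∈ D}) : (lowF x).card = (lowF x.val).card := by
  apply Finset.card_bij (fun (z : {y // y ∈ D}) _ => z.val)
  · intro z hz
    exact mem_lowF.2 (Subtype.coe_lt_coe.2 (mem_lowF.1 hz))
  · intro a _ b _ h
    exact Subtype.ext h
  · intro z hz
    have hzD : z ∈ D := hD x.2 (mem_lowF.1 hz).le
    exact ⟨⟨z, hzD⟩, mem_lowF.2 (Subtype.coe_lt_coe.1 (by exact mem_lowF.1 hz)), rfl⟩

lemma nkF_downset {D : Finset α} (hD : ∀ ⦃a b : α⦄, a ∈ D → b ≤ a → b ∈ D) (k : ℕ) :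
    nkF {y // y ∈ D} k = (D.filter fun x => (lowF x).card = k).card := by
  unfold nkF
  apply Finset.card_bij (fun (z : {y // y ∈ D}) _ => z.val)
  · intro z hz
    simp only [Finset.mem_filter, Finset.mem_univ, true_and] at hz
    simp only [Finset.mem_filter]
    exact ⟨z.2, by rw [← card_lowF_downset hD z]; exact hz⟩
  · intro a _ b _ h
    exact Subtype.ext h
  · intro z hz
    simp only [Finset.mem_filter] at hz
    refine ⟨⟨z, hz.1⟩, ?_, rfl⟩
    simp only [Finset.mem_filter, Finset.mem_univ, true_and]
    rw [card_lowF_downset hD ⟨z, hz.1⟩]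
    exact hz.2

end Machinery

section Hfacts


variable {l : ℕ}

lemma lamb_le {i : ℕ} (a b : WithTop (AntichainFin i)) : a ≤ b ↔ b = ⊤ ∨ a = b := by
  induction b using WithTop.recTopCoe with
  | top => simp
  | coe y =>
    induction a using WithTop.recTopCoe with
    | top => simp [WithTop.not_top_le_coe]
    | coe x =>
      simp only [WithTop.coe_le_coe, WithTop.coe_eq_coe]
      exact ⟨fun h => Or.inr h, fun h => by
        rcases h with h | h
        · exact absurd h (by simp)
        · exact le_of_eq h⟩

lemma inlH_inj {p q : Copies l (WithTop (AntichainFin 2))}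
    (h : (Sum.inl p : ↥(Hposet l)) = Sum.inl q) : p = q := Sum.inl.inj h

lemma inrH_inj {p q : WithTop (AntichainFin (3*(l-1)))}
    (h : (Sum.inr p : ↥(Hposet l)) = Sum.inr q) : p = q := Sum.inr.inj h

lemma copies_le {k : ℕ} {X : Type} [PartialOrder X] {p q : Copies k X} (h1 : p.1 = q.1)
    (h2 : p.2 ≤ q.2) : p ≤ q := ⟨h1, h2⟩

lemma copies_fst {k : ℕ} {X : Type} {p q : Copies k X} (h : p = q) : p.1 = q.1 := congrArg _ h
lemma copies_snd {k : ℕ} {X : Type} {p q : Copies k X} (h : p = q) : p.2 = q.2 := congrArg _ h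

lemma H_le {a b : ↥(Hposet l)} : a ≤ b ↔ a = b ∨
    (∃ (i : Fin l) (x : AntichainFin 2),
      a = Sum.inl (i, (x : WithTop (AntichainFin 2))) ∧
      b = Sum.inl (i, (⊤ : WithTop (AntichainFin 2)))) ∨
    (∃ x : AntichainFin (3*(l-1)),
      a = Sum.inr ((x : WithTop (AntichainFin (3*(l-1))))) ∧ b = Sum.inr ⊤) := by
  constructor
  · intro h
    rcases a with a | a <;> rcases b with b | b
    · erw [Sum.inl_le_inl_iff] at h
      obtain ⟨a1, a2⟩ := a; obtain ⟨b1, b2⟩ := b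
      obtain ⟨h1, h2⟩ := h
      cases h1
      rcases (lamb_le a2 b2).1 h2 with h3 | h3
      · subst h3
        induction a2 using WithTop.recTopCoe with
        | top => exact Or.inl rfl
        | coe x => exact Or.inr (Or.inl ⟨a1, x, rfl, rfl⟩)
      · subst h3; exact Or.inl rfl
    · exact absurd h Sum.not_inl_le_inr
    · exact absurd h Sum.not_inr_le_inl
    · erw [Sum.inr_le_inr_iff] at h
      rcases (lamb_le a b).1 h with h3 | h3
      · subst h3
        induction a using WithTop.recTopCoe with
        | top => exact Or.inl rfl
        | coe x => exact Or.inr (Or.inr ⟨x, rfl, rfl⟩)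
      · subst h3; exact Or.inl rfl
  · rintro (rfl | ⟨i, x, rfl, rfl⟩ | ⟨x, rfl, rfl⟩)
    · exact le_refl _
    · exact Sum.LiftRel.inl (copies_le rfl le_top)
    · exact Sum.LiftRel.inr le_top

lemma H_lt {a b : ↥(Hposet l)} : a < b ↔
    (∃ (i : Fin l) (x : AntichainFin 2),
      a = Sum.inl (i, (x : WithTop (AntichainFin 2))) ∧
      b = Sum.inl (i, (⊤ : WithTop (AntichainFin 2)))) ∨
    (∃ x : AntichainFin (3*(l-1)),
      a = Sum.inr ((x : WithTop (AntichainFin (3*(l-1))))) ∧ b = Sum.inr ⊤) := by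
  rw [lt_iff_le_and_ne, H_le]
  constructor
  · rintro ⟨(rfl | h | h), hne⟩
    · exact absurd rfl hne
    · exact Or.inl h
    · exact Or.inr h
  · rintro (⟨i, x, rfl, rfl⟩ | ⟨x, rfl, rfl⟩)
    · refine ⟨Or.inr (Or.inl ⟨i, x, rfl, rfl⟩), fun h => ?_⟩
      have h2 : ((x : WithTop (AntichainFin 2))) = ⊤ := copies_snd (inlH_inj h)
      exact WithTop.coe_ne_top h2
    · refine ⟨Or.inr (Or.inr ⟨x, rfl, rfl⟩), fun h => ?_⟩
      exact WithTop.coe_ne_top (inrH_inj h)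

lemma FF_H : FF ↥(Hposet l) := by
  constructor
  · intro x y z hxy hxz
    rcases H_lt.1 hxy with ⟨i, a, h1, rfl⟩ | ⟨a, h1, rfl⟩ <;>
      rcases H_lt.1 hxz with ⟨i', a', h2, rfl⟩ | ⟨a', h2, rfl⟩
    · rw [h1] at h2
      have h3 : i = i' := copies_fst (inlH_inj h2)
      rw [h3]
    · rw [h1] at h2; cases h2
    · rw [h1] at h2; cases h2
    · rfl
  · intro x y z hxy hyz
    rcases H_lt.1 hxy with ⟨i, a, h1, rfl⟩ | ⟨a, h1, rfl⟩ <;>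
      rcases H_lt.1 hyz with ⟨i', a', h2, h3⟩ | ⟨a', h2, h3⟩
    · have h4 : (⊤ : WithTop (AntichainFin 2)) = ↑a' := copies_snd (inlH_inj h2)
      exact WithTop.top_ne_coe h4
    · cases h2
    · cases h2
    · exact WithTop.top_ne_coe (inrH_inj h2)


lemma H_inj_inl (i : Fin l) : Function.Injective
    (fun a : AntichainFin 2 => (Sum.inl (i, (a : WithTop (AntichainFin 2))) : ↥(Hposet l))) := by
  intro a b h
  have h2 : ((a : WithTop (AntichainFin 2))) = b := copies_snd (inlH_inj h)
  exact WithTop.coe_injective h2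

lemma H_inj_inr : Function.Injective
    (fun a : AntichainFin (3*(l-1)) =>
      (Sum.inr ((a : WithTop (AntichainFin (3*(l-1))))) : ↥(Hposet l))) := by
  intro a b h
  exact WithTop.coe_injective (inrH_inj h)

def embInl (l : ℕ) (i : Fin l) : AntichainFin 2 ↪ ↥(Hposet l) :=
  ⟨fun a => Sum.inl (i, (a : WithTop (AntichainFin 2))), H_inj_inl i⟩

def embInr (l : ℕ) : AntichainFin (3*(l-1)) ↪ ↥(Hposet l) :=
  ⟨fun a => Sum.inr ((a : WithTop (AntichainFin (3*(l-1))))), H_inj_inr⟩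

lemma H_lowF_inl_top (i : Fin l) :
    lowF (Sum.inl (i, (⊤ : WithTop (AntichainFin 2))) : ↥(Hposet l)) =
      Finset.univ.map (embInl l i) := by
  ext y
  erw [mem_lowF, Finset.mem_map]
  constructor
  · intro hy
    rcases H_lt.1 hy with ⟨i', x, rfl, h2⟩ | ⟨x, h1, h2⟩
    · have h3 : i = i' := copies_fst (inlH_inj h2)
      subst h3
      exact ⟨x, Finset.mem_univ _, rfl⟩
    · cases h2
  · rintro ⟨a, _, rfl⟩
    exact H_lt.2 (Or.inl ⟨i, a, rfl, rfl⟩)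

lemma H_lowF_inr_top :
    lowF (Sum.inr (⊤ : WithTop (AntichainFin (3*(l-1)))) : ↥(Hposet l)) =
      Finset.univ.map (embInr l) := by
  ext y
  erw [mem_lowF, Finset.mem_map]
  constructor
  · intro hy
    rcases H_lt.1 hy with ⟨i', x, rfl, h2⟩ | ⟨x, h1, h2⟩
    · cases h2
    · subst h1
      exact ⟨x, Finset.mem_univ _, rfl⟩
  · rintro ⟨a, _, rfl⟩
    exact H_lt.2 (Or.inr ⟨a, rfl, rfl⟩)

lemma H_lowF_inl_coe (i : Fin l) (x : AntichainFin 2) :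
    lowF (Sum.inl (i, (x : WithTop (AntichainFin 2))) : ↥(Hposet l)) = ∅ := by
  rw [Finset.eq_empty_iff_forall_notMem]
  intro y hy
  rcases H_lt.1 (mem_lowF.1 hy) with ⟨i', x', h1, h2⟩ | ⟨x', h1, h2⟩
  · have h3 : ((x : WithTop (AntichainFin 2))) = ⊤ := copies_snd (inlH_inj h2)
    exact WithTop.coe_ne_top h3
  · cases h2

lemma H_lowF_inr_coe (x : AntichainFin (3*(l-1))) :
    lowF (Sum.inr ((x : WithTop (AntichainFin (3*(l-1))))) : ↥(Hposet l)) = ∅ := by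
  rw [Finset.eq_empty_iff_forall_notMem]
  intro y hy
  rcases H_lt.1 (mem_lowF.1 hy) with ⟨i', x', h1, h2⟩ | ⟨x', h1, h2⟩
  · cases h2
  · exact WithTop.coe_ne_top (inrH_inj h2)

lemma card_antichainFin (n : ℕ) : Fintype.card (AntichainFin n) = n := Fintype.card_fin n

lemma card_WT (n : ℕ) : Fintype.card (WithTop (AntichainFin n)) = n + 1 := by
  have h : Fintype.card (WithTop (AntichainFin n)) = Fintype.card (Option (AntichainFin n)) :=
    Fintype.card_congr (Equiv.refl _)
  rw [h, Fintype.card_option, card_antichainFin]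

lemma H_lc_inl_top (i : Fin l) :
    (lowF (Sum.inl (i, (⊤ : WithTop (AntichainFin 2))) : ↥(Hposet l))).card = 2 := by
  erw [H_lowF_inl_top, Finset.card_map, Finset.card_univ, card_antichainFin]

lemma H_lc_inr_top :
    (lowF (Sum.inr (⊤ : WithTop (AntichainFin (3*(l-1)))) : ↥(Hposet l))).card = 3*(l-1) := by
  erw [H_lowF_inr_top, Finset.card_map, Finset.card_univ, card_antichainFin]

lemma H_lc_inl_coe (i : Fin l) (x : AntichainFin 2) :
    (lowF (Sum.inl (i, (x : WithTop (AntichainFin 2))) : ↥(Hposet l))).card = 0 := by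
  rw [H_lowF_inl_coe, Finset.card_empty]

lemma H_lc_inr_coe (x : AntichainFin (3*(l-1))) :
    (lowF (Sum.inr ((x : WithTop (AntichainFin (3*(l-1))))) : ↥(Hposet l))).card = 0 := by
  rw [H_lowF_inr_coe, Finset.card_empty]

def isTopH {l : ℕ} (x : ↥(Hposet l)) : Prop :=
  ∃ i : Fin l, x = Sum.inl (i, (⊤ : WithTop (AntichainFin 2)))

def jDH {l : ℕ} (D : Finset ↥(Hposet l)) : ℕ := (D.filter isTopH).card

/-- every element of `H` has one of 4 shapes -/
lemma H_shape (x : ↥(Hposet l)) :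
    (∃ i : Fin l, x = Sum.inl (i, (⊤ : WithTop (AntichainFin 2)))) ∨
    (∃ (i : Fin l) (a : AntichainFin 2), x = Sum.inl (i, (a : WithTop (AntichainFin 2)))) ∨
    (x = Sum.inr (⊤ : WithTop (AntichainFin (3*(l-1))))) ∨
    (∃ a : AntichainFin (3*(l-1)), x = Sum.inr ((a : WithTop (AntichainFin (3*(l-1)))))) := by
  rcases x with x | x
  · obtain ⟨i, t⟩ := x
    induction t using WithTop.recTopCoe with
    | top => exact Or.inl ⟨i, rfl⟩
    | coe a => exact Or.inr (Or.inl ⟨i, a, rfl⟩)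
  · induction x using WithTop.recTopCoe with
    | top => exact Or.inr (Or.inr (Or.inl rfl))
    | coe a => exact Or.inr (Or.inr (Or.inr ⟨a, rfl⟩))

lemma not_isTopH_inl_coe (i : Fin l) (a : AntichainFin 2) :
    ¬ isTopH (Sum.inl (i, (a : WithTop (AntichainFin 2))) : ↥(Hposet l)) := by
  rintro ⟨i', h⟩
  exact WithTop.coe_ne_top (copies_snd (inlH_inj h))

lemma not_isTopH_inr {t : WithTop (AntichainFin (3*(l-1)))} :
    ¬ isTopH (Sum.inr t : ↥(Hposet l)) := by
  rintro ⟨i', h⟩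
  cases h

lemma inlH_mem_disjSum {l : ℕ} {s : Finset (Copies l (WithTop (AntichainFin 2)))}
    {t : Finset (WithTop (AntichainFin (3*(l-1))))} {x : Copies l (WithTop (AntichainFin 2))} :
    (Sum.inl x : ↥(Hposet l)) ∈ s.disjSum t ↔ x ∈ s := Finset.inl_mem_disjSum

lemma inrH_mem_disjSum {l : ℕ} {s : Finset (Copies l (WithTop (AntichainFin 2)))}
    {t : Finset (WithTop (AntichainFin (3*(l-1))))} {x : WithTop (AntichainFin (3*(l-1)))} :
    (Sum.inr x : ↥(Hposet l)) ∈ s.disjSum t ↔ x ∈ t := Finset.inr_mem_disjSum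

lemma H_profile (hl : 2 ≤ l) {D : Finset ↥(Hposet l)} (hD : IsDownset (Hposet l) D)
    {k : ℕ} (hk : 0 < k) :
    nkF ↥(subposet (Hposet l) D) k =
      if k = 2 then jDH D
      else if k = 3*(l-1) then (if Sum.inr ⊤ ∈ D then 1 else 0) else 0 := by
  have h1 : nkF ↥(subposet (Hposet l) D) k = (D.filter fun x => (lowF x).card = k).card :=
    nkF_downset hD k
  rw [h1]
  by_cases hk2 : k = 2
  · subst hk2
    simp only [if_pos rfl]
    rw [jDH]
    congr 1
    apply Finset.filter_congr
    intro x _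
    rcases H_shape x with ⟨i, rfl⟩ | ⟨i, a, rfl⟩ | rfl | ⟨a, rfl⟩
    · exact iff_of_true (H_lc_inl_top i) ⟨i, rfl⟩
    · exact iff_of_false (by erw [H_lc_inl_coe]; omega) (not_isTopH_inl_coe i a)
    · exact iff_of_false (by erw [H_lc_inr_top]; omega) not_isTopH_inr
    · exact iff_of_false (by erw [H_lc_inr_coe]; omega) not_isTopH_inr
  · rw [if_neg hk2]
    by_cases hk3 : k = 3*(l-1)
    · subst hk3
      rw [if_pos rfl]
      have h2 : D.filter (fun x => (lowF x).card = 3*(l-1)) =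
          D.filter (fun x => x = Sum.inr ⊤) := by
        refine @Finset.filter_congr _ _ _ _ (fun a => instDecidableEqSum a _) _ ?_
        intro x _
        rcases H_shape x with ⟨i, rfl⟩ | ⟨i, a, rfl⟩ | rfl | ⟨a, rfl⟩
        · refine iff_of_false (by erw [H_lc_inl_top]; omega) (fun h => by cases h)
        · refine iff_of_false (by erw [H_lc_inl_coe]; omega) (fun h => by cases h)
        · exact iff_of_true H_lc_inr_top rfl
        · exact iff_of_false (by erw [H_lc_inr_coe]; omega)
            (fun h => WithTop.coe_ne_top (inrH_inj h))
      erw [h2, Finset.filter_eq']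
      split_ifs with ha hb hb
      · rfl
      · exact absurd ha hb
      · exact absurd hb ha
      · rfl
    · rw [if_neg hk3]
      rw [Finset.card_eq_zero, Finset.filter_eq_empty_iff]
      intro x _
      rcases H_shape x with ⟨i, rfl⟩ | ⟨i, a, rfl⟩ | rfl | ⟨a, rfl⟩
      · erw [H_lc_inl_top]; omega
      · erw [H_lc_inl_coe]; omega
      · erw [H_lc_inr_top]; omega
      · erw [H_lc_inr_coe]; omega

lemma jDH_le (D : Finset ↥(Hposet l)) : jDH D ≤ l := by
  have h1 : D.filter isTopH ⊆ Finset.univ.map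
      ⟨fun i : Fin l => (Sum.inl (i, (⊤ : WithTop (AntichainFin 2))) : ↥(Hposet l)),
        by intro a b h; exact copies_fst (inlH_inj h)⟩ := by
    intro x hx
    obtain ⟨i, rfl⟩ := (Finset.mem_filter.1 hx).2
    erw [Finset.mem_map]
    exact ⟨i, Finset.mem_univ _, rfl⟩
  calc jDH D ≤ _ := Finset.card_le_card h1
  _ = l := by rw [Finset.card_map, Finset.card_univ, Fintype.card_fin]

def a20 : AntichainFin 2 := ⟨0, by omega⟩
def a21 : AntichainFin 2 := ⟨1, by omega⟩

lemma a20_ne_a21 : a20 ≠ a21 := by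
  intro h
  have h2 : (0 : ℕ) = 1 := congrArg Fin.val h
  omega

def fi0 {l : ℕ} (hl : 2 ≤ l) : Fin l := ⟨0, by omega⟩
def fi1 {l : ℕ} (hl : 2 ≤ l) : Fin l := ⟨1, by omega⟩

lemma fi0_ne_fi1 {l : ℕ} (hl : 2 ≤ l) : fi0 hl ≠ fi1 hl := by
  intro h
  have h2 : (0 : ℕ) = 1 := congrArg Fin.val h
  omega

def finLT (n j : ℕ) : Finset (Fin n) := Finset.univ.filter (fun i => i.val < j)

lemma mem_finLT {n j : ℕ} {i : Fin n} : i ∈ finLT n j ↔ i.val < j := by simp [finLT]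

lemma card_finLT {n j : ℕ} (h : j ≤ n) : (finLT n j).card = j := by
  have he : finLT n j = (Finset.range j).attachFin
      (fun m hm => lt_of_lt_of_le (Finset.mem_range.1 hm) h) := by
    ext x
    simp [finLT, Finset.mem_attachFin, Finset.mem_range]
  rw [he, Finset.card_attachFin, Finset.card_range]

def topEmb (l : ℕ) : Fin l ↪ ↥(Hposet l) :=
  ⟨fun i => Sum.inl (i, (⊤ : WithTop (AntichainFin 2))),
    fun a b h => copies_fst (inlH_inj h)⟩

def repF (l : ℕ) (hl : 2 ≤ l) (j : ℕ) : Finset (Fin l × WithTop (AntichainFin 2) ⊕ WithTop (AntichainFin (3*(l-1)))) :=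
  if j = 0 then
    Finset.disjSum
      ({(fi0 hl, (a20 : WithTop (AntichainFin 2))),
        (fi0 hl, (a21 : WithTop (AntichainFin 2))),
        (fi1 hl, (a20 : WithTop (AntichainFin 2)))} : Finset (Fin l × WithTop (AntichainFin 2)))
      ((Finset.univ : Finset (AntichainFin (3*(l-1)))).map Function.Embedding.some)
  else if j ≤ l then
    Finset.disjSum ((finLT l j) ×ˢ (Finset.univ : Finset (WithTop (AntichainFin 2))))
      ((finLT (3*(l-1)) (3*l - 3*j)).map Function.Embedding.some)
  else
    Finset.disjSum
      ({(fi0 hl, (a20 : WithTop (AntichainFin 2))),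
        (fi1 hl, (a20 : WithTop (AntichainFin 2)))} : Finset (Fin l × WithTop (AntichainFin 2)))
      (Finset.univ : Finset (WithTop (AntichainFin (3*(l-1)))))

lemma card_repF {l j : ℕ} (hl : 2 ≤ l) (hj : j ≤ l + 1) : (repF l hl j).card = 3 * l := by
  rw [repF]
  split_ifs with h0 hle
  · erw [Finset.card_disjSum, Finset.card_map, Finset.card_univ, card_antichainFin]
    have h3 : ({(fi0 hl, (a20 : WithTop (AntichainFin 2))),
        (fi0 hl, (a21 : WithTop (AntichainFin 2))),
        (fi1 hl, (a20 : WithTop (AntichainFin 2)))} :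
          Finset (Fin l × WithTop (AntichainFin 2))).card = 3 := by
      rw [Finset.card_insert_of_notMem, Finset.card_insert_of_notMem, Finset.card_singleton]
      · rw [Finset.mem_singleton]
        intro h
        exact fi0_ne_fi1 hl (copies_fst h)
      · rw [Finset.mem_insert, Finset.mem_singleton]
        push_neg
        constructor
        · intro h
          exact a20_ne_a21 (WithTop.coe_injective (copies_snd h))
        · intro h
          exact fi0_ne_fi1 hl (copies_fst h)
    rw [h3]
    omega
  · erw [Finset.card_disjSum, Finset.card_map, Finset.card_product, Finset.card_univ, card_WT,
      card_finLT hle, card_finLT (by omega)]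
    omega
  · have hj1 : j = l + 1 := by omega
    rw [Finset.card_disjSum, Finset.card_univ, card_WT]
    have h3 : ({(fi0 hl, (a20 : WithTop (AntichainFin 2))),
        (fi1 hl, (a20 : WithTop (AntichainFin 2)))} :
          Finset (Fin l × WithTop (AntichainFin 2))).card = 2 := by
      rw [Finset.card_insert_of_notMem, Finset.card_singleton]
      rw [Finset.mem_singleton]
      intro h
      exact fi0_ne_fi1 hl (copies_fst h)
    rw [h3]
    omega

lemma downset_repF {l j : ℕ} (hl : 2 ≤ l) : IsDownset (Hposet l) (repF l hl j) := by
  intro a b ha hba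
  rcases H_le.1 hba with rfl | ⟨i, x, rfl, rfl⟩ | ⟨x, rfl, rfl⟩
  · exact ha
  · rw [repF] at ha ⊢
    split_ifs at ha ⊢ with h0 hle
    · exfalso
      erw [Finset.inl_mem_disjSum, Finset.mem_insert, Finset.mem_insert,
        Finset.mem_singleton] at ha
      rcases ha with h | h | h <;>
        exact WithTop.top_ne_coe (copies_snd h)
    · erw [Finset.inl_mem_disjSum] at ha ⊢
      rw [Finset.mem_product] at ha ⊢
      exact ⟨ha.1, Finset.mem_univ _⟩
    · exfalso
      erw [Finset.inl_mem_disjSum, Finset.mem_insert, Finset.mem_singleton] at ha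
      rcases ha with h | h <;>
        exact WithTop.top_ne_coe (copies_snd h)
  · rw [repF] at ha ⊢
    split_ifs at ha ⊢ with h0 hle
    · exfalso
      erw [Finset.inr_mem_disjSum, Finset.mem_map] at ha
      obtain ⟨a', _, h⟩ := ha
      exact Option.some_ne_none a' h
    · exfalso
      erw [Finset.inr_mem_disjSum, Finset.mem_map] at ha
      obtain ⟨a', _, h⟩ := ha
      exact Option.some_ne_none a' h
    · erw [Finset.inr_mem_disjSum]
      exact Finset.mem_univ _

lemma jDH_repF {l j : ℕ} (hl : 2 ≤ l) (hj : j ≤ l) : jDH (repF l hl j) = j := by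
  erw [jDH, repF]
  split_ifs with h0 hle
  · subst h0
    erw [Finset.card_eq_zero, Finset.filter_eq_empty_iff]
    intro x hx
    rcases x with x | x
    · erw [Finset.inl_mem_disjSum, Finset.mem_insert, Finset.mem_insert,
        Finset.mem_singleton] at hx
      rcases hx with rfl | rfl | rfl
      · exact not_isTopH_inl_coe _ _
      · exact not_isTopH_inl_coe _ _
      · exact not_isTopH_inl_coe _ _
    · exact not_isTopH_inr
  · have he : (Finset.disjSum ((finLT l j) ×ˢ (Finset.univ : Finset (WithTop (AntichainFin 2))))
        ((finLT (3*(l-1)) (3*l - 3*j)).map Function.Embedding.some)).filter isTopH =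
        (finLT l j).map (topEmb l) := by
      ext x
      erw [Finset.mem_filter, Finset.mem_map]
      constructor
      · rintro ⟨hx, i, rfl⟩
        erw [Finset.inl_mem_disjSum, Finset.mem_product] at hx
        exact ⟨i, hx.1, rfl⟩
      · rintro ⟨i, hi, rfl⟩
        refine ⟨?_, ⟨i, rfl⟩⟩
        show (Sum.inl (i, (⊤ : WithTop (AntichainFin 2))) : ↥(Hposet l)) ∈ _
        erw [inlH_mem_disjSum, Finset.mem_product]
        exact ⟨hi, Finset.mem_univ _⟩
    erw [he, Finset.card_map, card_finLT hj]

lemma jDH_repF_big {l : ℕ} (hl : 2 ≤ l) : jDH (repF l hl (l+1)) = 0 := by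
  erw [jDH, repF]
  erw [if_neg (by omega), if_neg (by omega)]
  erw [Finset.card_eq_zero, Finset.filter_eq_empty_iff]
  intro x hx
  rcases x with x | x
  · erw [Finset.inl_mem_disjSum, Finset.mem_insert, Finset.mem_singleton] at hx
    rcases hx with rfl | rfl
    · exact not_isTopH_inl_coe _ _
    · exact not_isTopH_inl_coe _ _
  · exact not_isTopH_inr

lemma inrTop_mem_repF {l j : ℕ} (hl : 2 ≤ l) (hj : j ≤ l + 1) :
    ((Sum.inr ⊤ : ↥(Hposet l)) ∈ repF l hl j) ↔ j = l + 1 := by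
  rw [repF]
  split_ifs with h0 hle
  · subst h0
    erw [inrH_mem_disjSum, Finset.mem_map]
    constructor
    · rintro ⟨a', _, h⟩
      exact absurd h (Option.some_ne_none a')
    · omega
  · erw [inrH_mem_disjSum, Finset.mem_map]
    constructor
    · rintro ⟨a', _, h⟩
      exact absurd h (Option.some_ne_none a')
    · omega
  · erw [inrH_mem_disjSum]
    exact ⟨fun _ => by omega, fun _ => Finset.mem_univ _⟩

lemma jDH_zero_of_inrTop {l : ℕ} (hl : 2 ≤ l) {D : Finset ↥(Hposet l)}
    (hD : IsDownset (Hposet l) D) (hcard : D.card = 3*l)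
    (htop : (Sum.inr ⊤ : ↥(Hposet l)) ∈ D) : jDH D = 0 := by
  rw [jDH, Finset.card_eq_zero, Finset.filter_eq_empty_iff]
  rintro x hx ⟨i, rfl⟩
  have hsub : Finset.disjSum
      ({(i, (⊤ : WithTop (AntichainFin 2))), (i, (a20 : WithTop (AntichainFin 2))),
        (i, (a21 : WithTop (AntichainFin 2)))} : Finset (Copies l (WithTop (AntichainFin 2))))
      (Finset.univ : Finset (WithTop (AntichainFin (3*(l-1))))) ⊆ D := by
    intro y hy
    rcases y with y | y
    · erw [inlH_mem_disjSum, Finset.mem_insert, Finset.mem_insert, Finset.mem_singleton] at hy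
      rcases hy with rfl | rfl | rfl
      · exact hx
      · exact hD hx (Sum.LiftRel.inl (copies_le rfl le_top))
      · exact hD hx (Sum.LiftRel.inl (copies_le rfl le_top))
    · rw [inrH_mem_disjSum] at hy
      induction y using WithTop.recTopCoe with
      | top => exact htop
      | coe a => exact hD htop (Sum.LiftRel.inr le_top)
  have hc : (Finset.disjSum
      ({(i, (⊤ : WithTop (AntichainFin 2))), (i, (a20 : WithTop (AntichainFin 2))),
        (i, (a21 : WithTop (AntichainFin 2)))} : Finset (Copies l (WithTop (AntichainFin 2))))
      (Finset.univ : Finset (WithTop (AntichainFin (3*(l-1)))))).card = 3*l + 1 := by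
    rw [Finset.card_disjSum, Finset.card_univ, card_WT]
    have h3 : ({(i, (⊤ : WithTop (AntichainFin 2))), (i, (a20 : WithTop (AntichainFin 2))),
        (i, (a21 : WithTop (AntichainFin 2)))} :
          Finset (Copies l (WithTop (AntichainFin 2)))).card = 3 := by
      erw [Finset.card_insert_of_notMem, Finset.card_insert_of_notMem, Finset.card_singleton]
      · erw [Finset.mem_singleton]
        intro h
        exact a20_ne_a21 (WithTop.coe_injective (copies_snd h))
      · erw [Finset.mem_insert, Finset.mem_singleton]
        push_neg
        constructor
        · intro h
          exact WithTop.top_ne_coe (copies_snd h)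
        · intro h
          exact WithTop.top_ne_coe (copies_snd h)
    rw [h3]
    omega
  have := Finset.card_le_card hsub
  erw [hc, hcard] at this
  omega

lemma downset_iso_rep {l : ℕ} (hl : 2 ≤ l) {D : Finset ↥(Hposet l)}
    (hD : IsDownset (Hposet l) D) (hcard : D.card = 3*l) :
    ∃ j ≤ l + 1, Nonempty (↥(subposet (Hposet l) D) ≃o ↥(subposet (Hposet l) (repF l hl j))) := by
  by_cases htop : (Sum.inr ⊤ : ↥(Hposet l)) ∈ D
  · refine ⟨l+1, le_refl _, ?_⟩
    apply ff_iso
    · exact FF_subtype FF_H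
    · exact FF_subtype FF_H
    · have hc1 : Fintype.card ↥(subposet (Hposet l) D) = D.card := Fintype.card_coe _
      have hc2 : Fintype.card ↥(subposet (Hposet l) (repF l hl (l+1))) = (repF l hl (l+1)).card :=
        Fintype.card_coe _
      rw [hc1, hc2, hcard, card_repF hl (le_refl _)]
    · intro k hk
      erw [H_profile hl hD hk, H_profile hl (downset_repF hl) hk,
        jDH_zero_of_inrTop hl hD hcard htop, jDH_repF_big hl, if_pos htop,
        if_pos ((inrTop_mem_repF hl (le_refl _)).2 rfl)]
  · have hjl := jDH_le D
    refine ⟨jDH D, by omega, ?_⟩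
    apply ff_iso
    · exact FF_subtype FF_H
    · exact FF_subtype FF_H
    · have hc1 : Fintype.card ↥(subposet (Hposet l) D) = D.card := Fintype.card_coe _
      have hc2 : Fintype.card ↥(subposet (Hposet l) (repF l hl (jDH D))) =
          (repF l hl (jDH D)).card := Fintype.card_coe _
      rw [hc1, hc2, hcard, card_repF hl (by omega)]
    · intro k hk
      have h4 : ¬ ((Sum.inr ⊤ : ↥(Hposet l)) ∈ repF l hl (jDH D)) := by
        intro h
        have := (inrTop_mem_repF hl (by omega)).1 h
        omega
      erw [H_profile hl hD hk, H_profile hl (downset_repF hl) hk,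
        jDH_repF hl hjl, if_neg htop, if_neg h4]

lemma DSet_eq {l : ℕ} (hl : 2 ≤ l) :
    DSet (3*l) (Hposet l) =
      (fun j => cls (subposet (Hposet l) (repF l hl j))) '' (Set.Iic (l+1)) := by
  ext c
  constructor
  · rintro ⟨D, hD, hcard, rfl⟩
    obtain ⟨j, hj, ⟨e⟩⟩ := downset_iso_rep hl hD hcard
    exact ⟨j, hj, Quotient.sound ⟨e.symm⟩⟩
  · rintro ⟨j, hj, rfl⟩
    exact ⟨repF l hl j, downset_repF hl, card_repF hl hj, rfl⟩

lemma cls_nkF_eq {P Q : FinPartOrd.{0}} (h : cls P = cls Q) (k : ℕ) : nkF ↥P k = nkF ↥Q k := by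
  obtain ⟨e⟩ := Quotient.exact h
  exact (nkF_iso e k).symm

lemma DSet_ncard {l : ℕ} (hl : 2 ≤ l) : (DSet (3*l) (Hposet l)).ncard = l + 2 := by
  have hinj : Set.InjOn (fun j => cls (subposet (Hposet l) (repF l hl j))) (Set.Iic (l+1)) := by
    intro j1 h1 j2 h2 he
    rw [Set.mem_Iic] at h1 h2
    have e2 := cls_nkF_eq he 2
    have e3 := cls_nkF_eq he (3*(l-1))
    have h32 : ¬ (3*(l-1) = 2) := by omega
    have p1 := H_profile hl (downset_repF (l := l) (j := j1) hl) (k := 2) (by omega)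
    have p2 := H_profile hl (downset_repF (l := l) (j := j2) hl) (k := 2) (by omega)
    have p3 := H_profile hl (downset_repF (l := l) (j := j1) hl) (k := 3*(l-1)) (by omega)
    have p4 := H_profile hl (downset_repF (l := l) (j := j2) hl) (k := 3*(l-1)) (by omega)
    rw [p1, p2, if_pos rfl, if_pos rfl] at e2
    rw [p3, p4, if_neg h32, if_neg h32, if_pos (rfl : 3*(l-1) = 3*(l-1)),
      if_pos (rfl : 3*(l-1) = 3*(l-1))] at e3
    by_cases c1 : j1 = l+1 <;> by_cases c2 : j2 = l+1
    · rw [c1, c2]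
    · exfalso
      erw [if_pos ((inrTop_mem_repF hl h1).2 c1),
        if_neg (fun h => c2 ((inrTop_mem_repF hl h2).1 h))] at e3
      omega
    · exfalso
      erw [if_neg (fun h => c1 ((inrTop_mem_repF hl h1).1 h)),
        if_pos ((inrTop_mem_repF hl h2).2 c2)] at e3
      omega
    · rw [jDH_repF hl (by omega), jDH_repF hl (by omega)] at e2
      exact e2
  rw [DSet_eq hl, Set.ncard_image_of_injOn hinj]
  rw [show (Set.Iic (l+1) : Set ℕ) = ↑(Finset.Iic (l+1)) from (Finset.coe_Iic _).symm,
    Set.ncard_coe_finset, Nat.card_Iic]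

lemma chain_card_le_two {α : Type} [PartialOrder α]
    (h3 : ∀ x y z : α, x < y → y < z → False) (c : Finset α)
    (hc : IsChain (· ≤ ·) (c : Set α)) : c.card ≤ 2 := by
  by_contra hlt
  push_neg at hlt
  obtain ⟨a, ha, b, hb, d, hd, hab, had, hbd⟩ := Finset.two_lt_card.1 hlt
  have cab := hc (Finset.mem_coe.2 ha) (Finset.mem_coe.2 hb) hab
  have cbd := hc (Finset.mem_coe.2 hb) (Finset.mem_coe.2 hd) hbd
  have cad := hc (Finset.mem_coe.2 ha) (Finset.mem_coe.2 hd) had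
  rcases cab with h1 | h1 <;> rcases cbd with h2 | h2 <;> rcases cad with h4 | h4
  · exact h3 a b d (lt_of_le_of_ne h1 hab) (lt_of_le_of_ne h2 hbd)
  · exact had (le_antisymm (h1.trans h2) h4)
  · exact h3 a d b (lt_of_le_of_ne h4 had) (lt_of_le_of_ne h2 (Ne.symm hbd))
  · exact h3 d a b (lt_of_le_of_ne h4 (Ne.symm had)) (lt_of_le_of_ne h1 hab)
  · exact h3 b a d (lt_of_le_of_ne h1 (Ne.symm hab)) (lt_of_le_of_ne h4 had)
  · exact h3 b d a (lt_of_le_of_ne h2 hbd) (lt_of_le_of_ne h4 (Ne.symm had))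
  · exact had (le_antisymm h4 (h2.trans h1))
  · exact h3 d b a (lt_of_le_of_ne h2 (Ne.symm hbd)) (lt_of_le_of_ne h1 (Ne.symm hab))

lemma height_le_two (Q : FinPartOrd.{0})
    (h3 : ∀ x y z : ↥Q, x < y → y < z → False) : posetHeight Q ≤ 2 := by
  apply csSup_le
  · exact ⟨0, ∅, by simp [IsChain, Set.Pairwise], rfl⟩
  · rintro k ⟨c, hc, rfl⟩
    exact chain_card_le_two h3 c hc

lemma no3_of_iso {α β : Type} [PartialOrder α] [PartialOrder β] (e : α ≃o β)
    (h3 : ∀ x y z : α, x < y → y < z → False) :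
    ∀ x y z : β, x < y → y < z → False := fun _ _ _ hxy hyz =>
  h3 _ _ _ (e.symm.lt_iff_lt.2 hxy) (e.symm.lt_iff_lt.2 hyz)

lemma no3_subtype {α : Type} [PartialOrder α] {p : α → Prop}
    (h3 : ∀ x y z : α, x < y → y < z → False) :
    ∀ x y z : Subtype p, x < y → y < z → False := fun x y z hxy hyz =>
  h3 x.val y.val z.val (Subtype.coe_lt_coe.2 hxy) (Subtype.coe_lt_coe.2 hyz)

lemma size_H {l : ℕ} (hl : 2 ≤ l) : size (Hposet l) = 6*l - 2 := by
  have h1 : Fintype.card ↥(Hposet l) =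
      Fintype.card (Copies l (WithTop (AntichainFin 2)) ⊕ WithTop (AntichainFin (3*(l-1)))) :=
    Fintype.card_congr (Equiv.refl _)
  have h2 : Fintype.card (Copies l (WithTop (AntichainFin 2))) = 3*l := by
    have h : Fintype.card (Copies l (WithTop (AntichainFin 2))) =
        Fintype.card (Fin l × WithTop (AntichainFin 2)) := Fintype.card_congr (Equiv.refl _)
    rw [h, Fintype.card_prod, Fintype.card_fin, card_WT]
    omega
  show Fintype.card ↥(Hposet l) = 6*l - 2
  rw [h1, Fintype.card_sum, h2, card_WT]
  omega

lemma downset_extend {α : Type} [PartialOrder α] [Fintype α] {D : Finset α}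
    (hD : ∀ ⦃a b : α⦄, a ∈ D → b ≤ a → b ∈ D) {m : ℕ} (h1 : D.card ≤ m)
    (h2 : m ≤ Fintype.card α) :
    ∃ D' : Finset α, D ⊆ D' ∧ (∀ ⦃a b : α⦄, a ∈ D' → b ≤ a → b ∈ D') ∧ D'.card = m := by
  revert h2
  induction m, h1 using Nat.le_induction with
  | base => exact fun _ => ⟨D, Finset.Subset.refl _, hD, rfl⟩
  | succ m hm ih =>
    intro h2
    obtain ⟨D', hsub, hD', hcard⟩ := ih (by omega)
    have hne : (Finset.univ \ D').Nonempty := by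
      rw [← Finset.card_pos, Finset.card_sdiff_of_subset (Finset.subset_univ _), Finset.card_univ]
      omega
    obtain ⟨x, hx, hmin⟩ : ∃ m ∈ Finset.univ \ D', ∀ y ∈ Finset.univ \ D', ¬y < m := by
        obtain ⟨m, hm⟩ := Finset.exists_minimal hne
        exact ⟨m, hm.1, fun y hy => hm.not_lt hy⟩
    refine ⟨insert x D', hsub.trans (Finset.subset_insert _ _), ?_, ?_⟩
    · intro a b ha hba
      rw [Finset.mem_insert] at ha ⊢
      rcases ha with rfl | ha
      · by_cases hbD : b ∈ D'
        · exact Or.inr hbD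
        · have hbx : b ∈ Finset.univ \ D' := by
            rw [Finset.mem_sdiff]
            exact ⟨Finset.mem_univ _, hbD⟩
          rcases eq_or_lt_of_le hba with rfl | hltb
          · exact Or.inl rfl
          · exact absurd hltb (hmin b hbx)
      · exact Or.inr (hD' ha hba)
    · rw [Finset.card_insert_of_notMem (fun hxx => (Finset.mem_sdiff.1 hx).2 hxx), hcard]

lemma card_lowF_subposet {Q : FinPartOrd.{0}} {D : Finset ↥Q} (hD : IsDownset Q D)
    (x : ↥(subposet Q D)) : (lowF x).card = (lowF (x.val : ↥Q)).card :=
  card_lowF_downset hD x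

lemma lc_iso_transfer {Q R : FinPartOrd.{0}} {D : Finset ↥Q} {E : Finset ↥R}
    (hD : IsDownset Q D) (hE : IsDownset R E)
    (e : ↥(subposet Q D) ≃o ↥(subposet R E)) (x : ↥(subposet Q D)) :
    (lowF (x.val : ↥Q)).card = (lowF ((e x).val : ↥R)).card := by
  rw [← card_lowF_subposet hD x, ← card_lowF_subposet hE (e x), card_lowF_iso e x]

lemma no_two_uppers {l : ℕ} {Q : FinPartOrd.{0}}
    (hW : IsWitness (3*l) (DSet (3*l) (Hposet l)) Q)
    {D : Finset ↥Q} (hD : IsDownset Q D) (hcard : D.card = 3*l)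
    {x t u : ↥Q} (hx : x ∈ D) (ht : t ∈ D) (hu : u ∈ D)
    (hxt : x < t) (hxu : x < u) : t = u := by
  have hmem : cls (subposet Q D) ∈ DSet (3*l) (Hposet l) := by
    rw [← hW]
    exact ⟨D, hD, hcard, rfl⟩
  obtain ⟨E, hE, hEcard, hcls⟩ := hmem
  obtain ⟨e⟩ := Quotient.exact hcls
  have hFF : FF ↥(subposet Q D) := FF_iso e (FF_subtype FF_H)
  have h := hFF.1 ⟨x, hx⟩ ⟨t, ht⟩ ⟨u, hu⟩ (Subtype.mk_lt_mk.2 hxt) (Subtype.mk_lt_mk.2 hxu)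
  exact congrArg Subtype.val h

lemma witness_lower {l : ℕ} (hl : 2 ≤ l) (Q : FinPartOrd.{0})
    (hW : IsWitness (3*l) (DSet (3*l) (Hposet l)) Q) : 6*l - 2 ≤ size Q := by
  have h1 : cls (subposet (Hposet l) (repF l hl l)) ∈ DSet (3*l) Q := by
    rw [hW]
    exact ⟨repF l hl l, downset_repF hl, card_repF hl (by omega), rfl⟩
  obtain ⟨D₁, hD₁, hcard₁, hcls₁⟩ := h1
  obtain ⟨e₁⟩ := Quotient.exact hcls₁
  have h2 : cls (subposet (Hposet l) (repF l hl (l+1))) ∈ DSet (3*l) Q := by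
    rw [hW]
    exact ⟨repF l hl (l+1), downset_repF hl, card_repF hl (le_refl _), rfl⟩
  obtain ⟨D₂, hD₂, hcard₂, hcls₂⟩ := h2
  obtain ⟨e₂⟩ := Quotient.exact hcls₂
  -- facts about D₁ via e₁
  have hnotinr : ∀ (p : ↥(subposet Q D₁)), ¬ ∃ t, ((e₁ p).val : ↥(Hposet l)) = Sum.inr t := by
    rintro p ⟨t, hv⟩
    have hm := (e₁ p).2
    rw [hv] at hm
    induction t using WithTop.recTopCoe with
    | top => exact absurd ((inrTop_mem_repF hl (by omega)).1 hm) (by omega)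
    | coe a =>
      erw [repF, if_neg (by omega), if_pos (le_refl l), inrH_mem_disjSum, Finset.mem_map] at hm
      obtain ⟨a', ha', _⟩ := hm
      have := mem_finLT.1 ha'
      omega
  have hA : ∀ x (hx : x ∈ D₁), (lowF x).card = 0 ∨ (lowF x).card = 2 := by
    intro x hx
    have htr := lc_iso_transfer hD₁ (downset_repF hl) e₁ ⟨x, hx⟩
    rcases H_shape ((e₁ ⟨x, hx⟩).val) with ⟨i, hv⟩ | ⟨i, a, hv⟩ | hv | ⟨a, hv⟩
    · right; erw [htr, hv, H_lc_inl_top]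
    · left; erw [htr, hv, H_lc_inl_coe]
    · exact absurd ⟨⊤, hv⟩ (hnotinr ⟨x, hx⟩)
    · exact absurd ⟨_, hv⟩ (hnotinr ⟨x, hx⟩)
  have hB : ∀ x (hx : x ∈ D₁), (lowF x).card = 0 → ∃ u, u ∈ D₁ ∧ x < u := by
    intro x hx h0
    have htr := lc_iso_transfer hD₁ (downset_repF hl) e₁ ⟨x, hx⟩
    rcases H_shape ((e₁ ⟨x, hx⟩).val) with ⟨i, hv⟩ | ⟨i, a, hv⟩ | hv | ⟨a, hv⟩
    · erw [htr, hv, H_lc_inl_top] at h0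
      omega
    · have hmemtop : (Sum.inl (i, (⊤ : WithTop (AntichainFin 2))) : ↥(Hposet l)) ∈
          repF l hl l := by
        erw [repF, if_neg (by omega), if_pos (le_refl l), inlH_mem_disjSum, Finset.mem_product]
        exact ⟨mem_finLT.2 i.2, Finset.mem_univ _⟩
      have hlt2 : e₁ ⟨x, hx⟩ < (⟨_, hmemtop⟩ : ↥(subposet (Hposet l) (repF l hl l))) := by
        erw [← Subtype.coe_lt_coe, hv]
        exact H_lt.2 (Or.inl ⟨i, a, rfl, rfl⟩)
      have hlt3 : (⟨x, hx⟩ : ↥(subposet Q D₁)) < e₁.symm ⟨_, hmemtop⟩ := by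
        apply e₁.lt_iff_lt.1
        erw [e₁.apply_symm_apply]
        exact hlt2
      exact ⟨(e₁.symm ⟨_, hmemtop⟩).val, (e₁.symm ⟨_, hmemtop⟩).2, Subtype.coe_lt_coe.2 hlt3⟩
    · exact absurd ⟨⊤, hv⟩ (hnotinr ⟨x, hx⟩)
    · exact absurd ⟨_, hv⟩ (hnotinr ⟨x, hx⟩)
  -- the big top
  have memrep : (Sum.inr ⊤ : ↥(Hposet l)) ∈ repF l hl (l+1) :=
    (inrTop_mem_repF hl (le_refl _)).2 rfl
  set tQ : ↥Q := (e₂.symm ⟨_, memrep⟩).val with htQ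
  have htD₂ : tQ ∈ D₂ := (e₂.symm ⟨_, memrep⟩).2
  have hlct : (lowF tQ).card = 3*(l-1) := by
    have htr := lc_iso_transfer hD₂ (downset_repF hl) e₂ (e₂.symm ⟨_, memrep⟩)
    erw [e₂.apply_symm_apply] at htr
    rw [htQ, htr]
    exact H_lc_inr_top
  have hFF₂ : FF ↥(subposet Q D₂) := FF_iso e₂.symm (FF_subtype FF_H)
  have hFF₁ : FF ↥(subposet Q D₁) := FF_iso e₁.symm (FF_subtype FF_H)
  -- t not in D₁
  have htnot : tQ ∉ D₁ := by
    intro ht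
    rcases hA tQ ht with h | h <;> rw [hlct] at h <;> omega
  -- no element below t is in D₁
  have hE : ∀ x, x ∈ lowF tQ → x ∈ D₁ → False := by
    intro x hxl hx
    have hxt : x < tQ := mem_lowF.1 hxl
    have hxD₂ : x ∈ D₂ := hD₂ htD₂ hxt.le
    have hlcx : (lowF x).card = 0 := by
      rw [Finset.card_eq_zero, Finset.eq_empty_iff_forall_notMem]
      intro z hz
      have hzx : z < x := mem_lowF.1 hz
      have hzD₂ : z ∈ D₂ := hD₂ hxD₂ hzx.le
      exact hFF₂.2 ⟨z, hzD₂⟩ ⟨x, hxD₂⟩ ⟨tQ, htD₂⟩ (Subtype.mk_lt_mk.2 hzx)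
        (Subtype.mk_lt_mk.2 hxt)
    obtain ⟨u, huD₁, hxu⟩ := hB x hx hlcx
    have htu : tQ ≠ u := fun h => htnot (h ▸ huD₁)
    -- build a bad downset
    have hdownA : ∀ ⦃a b : ↥Q⦄, a ∈ insert tQ (lowF tQ) → b ≤ a → b ∈ insert tQ (lowF tQ) := by
      intro a b ha hba
      rw [Finset.mem_insert] at ha ⊢
      rcases ha with rfl | ha
      · rcases eq_or_lt_of_le hba with rfl | hlt
        · exact Or.inl rfl
        · exact Or.inr (mem_lowF.2 hlt)
      · have hat : a < tQ := mem_lowF.1 ha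
        rcases eq_or_lt_of_le hba with rfl | hlt
        · exact Or.inr ha
        · exfalso
          have haD₂ : a ∈ D₂ := hD₂ htD₂ hat.le
          have hbD₂ : b ∈ D₂ := hD₂ haD₂ hlt.le
          exact hFF₂.2 ⟨b, hbD₂⟩ ⟨a, haD₂⟩ ⟨tQ, htD₂⟩ (Subtype.mk_lt_mk.2 hlt)
            (Subtype.mk_lt_mk.2 hat)
    have hdownB : ∀ ⦃a b : ↥Q⦄, a ∈ insert u (lowF u) → b ≤ a → b ∈ insert u (lowF u) := by
      intro a b ha hba
      rw [Finset.mem_insert] at ha ⊢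
      rcases ha with rfl | ha
      · rcases eq_or_lt_of_le hba with rfl | hlt
        · exact Or.inl rfl
        · exact Or.inr (mem_lowF.2 hlt)
      · have hat : a < u := mem_lowF.1 ha
        rcases eq_or_lt_of_le hba with rfl | hlt
        · exact Or.inr ha
        · exfalso
          have haD₁ : a ∈ D₁ := hD₁ huD₁ hat.le
          have hbD₁ : b ∈ D₁ := hD₁ haD₁ hlt.le
          exact hFF₁.2 ⟨b, hbD₁⟩ ⟨a, haD₁⟩ ⟨u, huD₁⟩ (Subtype.mk_lt_mk.2 hlt)
            (Subtype.mk_lt_mk.2 hat)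
    set D₀ : Finset ↥Q := insert tQ (lowF tQ) ∪ insert u (lowF u) with hD₀
    have hdown₀ : ∀ ⦃a b : ↥Q⦄, a ∈ D₀ → b ≤ a → b ∈ D₀ := by
      intro a b ha hba
      rw [hD₀, Finset.mem_union] at ha ⊢
      rcases ha with ha | ha
      · exact Or.inl (hdownA ha hba)
      · exact Or.inr (hdownB ha hba)
    have hxlu : x ∈ lowF u := mem_lowF.2 hxu
    have hcard₀ : D₀.card ≤ 3*l := by
      have he : D₀ = insert tQ (lowF tQ) ∪ insert u ((lowF u).erase x) := by
        rw [hD₀]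
        ext y
        simp only [Finset.mem_union, Finset.mem_insert, Finset.mem_erase]
        constructor
        · rintro (h | rfl | h)
          · exact Or.inl h
          · exact Or.inr (Or.inl rfl)
          · by_cases hyx : y = x
            · subst hyx
              exact Or.inl (Or.inr hxl)
            · exact Or.inr (Or.inr ⟨hyx, h⟩)
        · rintro (h | rfl | ⟨_, h⟩)
          · exact Or.inl h
          · exact Or.inr (Or.inl rfl)
          · exact Or.inr (Or.inr h)
      have hc1 : (insert tQ (lowF tQ)).card ≤ 3*l - 3 + 1 := by
        apply le_trans (Finset.card_insert_le _ _)
        rw [hlct]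
        omega
      have hc2 : (insert u ((lowF u).erase x)).card ≤ 2 := by
        apply le_trans (Finset.card_insert_le _ _)
        rw [Finset.card_erase_of_mem hxlu]
        have := hA u huD₁
        omega
      rw [he]
      apply le_trans (Finset.card_union_le _ _)
      omega
    have h3lQ : 3*l ≤ Fintype.card ↥Q := by
      rw [← hcard₁, ← Finset.card_univ]
      exact Finset.card_le_card (Finset.subset_univ D₁)
    obtain ⟨D', hsub', hdown', hcard'⟩ := downset_extend hdown₀ hcard₀ h3lQ
    have hxD' : x ∈ D' := hsub' (by
      rw [hD₀, Finset.mem_union]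
      exact Or.inl (Finset.mem_insert.2 (Or.inr hxl)))
    have htD' : tQ ∈ D' := hsub' (by
      rw [hD₀, Finset.mem_union]
      exact Or.inl (Finset.mem_insert.2 (Or.inl rfl)))
    have huD' : u ∈ D' := hsub' (by
      rw [hD₀, Finset.mem_union]
      exact Or.inr (Finset.mem_insert.2 (Or.inl rfl)))
    exact htu (no_two_uppers hW hdown' hcard' hxD' htD' huD' hxt hxu)
  -- conclusion
  have hdisj : Disjoint D₁ (insert tQ (lowF tQ)) := by
    rw [Finset.disjoint_right]
    intro a ha
    rw [Finset.mem_insert] at ha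
    rcases ha with rfl | ha
    · exact htnot
    · exact fun haD₁ => hE a ha haD₁
  have hcardins : (insert tQ (lowF tQ)).card = 3*l - 3 + 1 := by
    rw [Finset.card_insert_of_notMem (fun h => lt_irrefl tQ (mem_lowF.1 h)), hlct]
    omega
  show 6*l - 2 ≤ Fintype.card ↥Q
  rw [← Finset.card_univ]
  calc 6*l - 2 = (D₁ ∪ insert tQ (lowF tQ)).card := by
        rw [Finset.card_union_of_disjoint hdisj, hcard₁, hcardins]
        omega
    _ ≤ Finset.univ.card := Finset.card_le_card (Finset.subset_univ _)

end Hfacts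

/-- For `ℓ ≥ 2`, the set `D_{3ℓ}(H_ℓ)` has the witness `H_ℓ`, has
`k = ℓ + 2` members of size `n = 3ℓ`, its smallest witness has size `6ℓ − 2`, every member of
`D_{3ℓ}(H_ℓ)` and `H_ℓ` itself have height at most `2`, and `6ℓ − 2 > 4ℓ + 2 + c` whenever
`ℓ > 2 + c/2`. -/
theorem H_family (l : ℕ) (hl : 2 ≤ l) :
    IsWitness (3 * l) (DSet (3 * l) (Hposet l)) (Hposet l) ∧
      (DSet (3 * l) (Hposet l)).ncard = l + 2 ∧
      (∀ x ∈ DSet (3 * l) (Hposet l), usize x = 3 * l) ∧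
      size (Hposet l) = 6 * l - 2 ∧
      (∀ Q : FinPartOrd.{0}, IsWitness (3 * l) (DSet (3 * l) (Hposet l)) Q →
        6 * l - 2 ≤ size Q) ∧
      posetHeight (Hposet l) ≤ 2 ∧
      (∀ R : FinPartOrd.{0}, cls R ∈ DSet (3 * l) (Hposet l) → posetHeight R ≤ 2) ∧
      ∀ c : ℕ, 4 + c < 2 * l → 3 * l + (l + 2) + c < 6 * l - 2 := by
  refine ⟨rfl, DSet_ncard hl, ?_, size_H hl, fun Q hQ => witness_lower hl Q hQ,
    height_le_two _ FF_H.2, ?_, fun c hc => by omega⟩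
  · rintro x ⟨D, hD, hcard, rfl⟩
    calc usize (cls (subposet (Hposet l) D)) = Fintype.card ↥(subposet (Hposet l) D) := rfl
      _ = D.card := Fintype.card_coe _
      _ = 3 * l := hcard
  · rintro R hR
    obtain ⟨D, hD, hcard, hcls⟩ := hR
    obtain ⟨e⟩ := Quotient.exact hcls
    exact height_le_two _ (no3_of_iso e (no3_subtype FF_H.2))
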